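/- arXiv:2005.09680 — 2 statements merged into one kernel-verified Lean document; each statement's English description precedes it below -/
import Mathlib

section
/- The group N_{pq²} has no normal subgroup of order q². -/
open Multiplicative

namespace Mizerka

/-- The standing hypotheses: `p` and `q` are odd primes with `q ∣ p - 1`, and `i` is a
natural number with `i ≡ 1 (mod q)` whose multiplicative order modulo `p` equals `q`. -/
structure Hyp (p q i : ℕ) : Prop where
  hp : Nat.Prime p
  hq : Nat.Prime q
  hoddp : Odd p
  hoddq : Odd q
  hdvd : q ∣ p - 1
  hmod : i ≡ 1 [MOD q]
  hord : orderOf (i : ZMod p) = q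

namespace Hyp

variable {p q i : ℕ}

theorem coprime_q (h : Hyp p q i) : Nat.Coprime i q := by
  have h1 : i % q = 1 % q := h.hmod
  unfold Nat.Coprime
  rw [Nat.gcd_comm, Nat.gcd_rec, h1, ← Nat.gcd_rec, Nat.gcd_one_right]

theorem coprime_p (h : Hyp p q i) : Nat.Coprime i p := by
  haveI : NeZero p := ⟨h.hp.ne_zero⟩
  have hq1 : q - 1 + 1 = q := Nat.succ_pred_eq_of_pos h.hq.pos
  have hmul : (i : ZMod p) * (i : ZMod p) ^ (q - 1) = 1 := by
    rw [← pow_succ', hq1, ← h.hord, pow_orderOf_eq_one]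
  exact (ZMod.isUnit_iff_coprime i p).mp (IsUnit.of_mul_eq_one _ hmul)

theorem coprime (h : Hyp p q i) : Nat.Coprime i (p * q) :=
  Nat.Coprime.mul_right h.coprime_p h.coprime_q

theorem pow_q_modeq (h : Hyp p q i) : i ^ q ≡ 1 [MOD p * q] := by
  have hpq : p ≠ q := by
    have h1 : 0 < p - 1 := by have := h.hp.two_le; omega
    have := Nat.le_of_dvd h1 h.hdvd
    omega
  have hc : Nat.Coprime p q := (Nat.coprime_primes h.hp h.hq).mpr hpq
  rw [← Nat.modEq_and_modEq_iff_modEq_mul hc]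
  constructor
  · haveI : NeZero p := ⟨h.hp.ne_zero⟩
    have hcast : ((i ^ q : ℕ) : ZMod p) = ((1 : ℕ) : ZMod p) := by
      push_cast
      rw [← h.hord, pow_orderOf_eq_one]
    exact (ZMod.natCast_eq_natCast_iff _ _ _).mp hcast
  · calc i ^ q ≡ 1 ^ q [MOD q] := h.hmod.pow q
      _ = 1 := one_pow q

/-- The unit of `ZMod (p*q)` determined by `i`. -/
def unit (h : Hyp p q i) : (ZMod (p * q))ˣ := ZMod.unitOfCoprime i h.coprime

/-- The unit of `ZMod p` determined by `i`. -/
def unitP (h : Hyp p q i) : (ZMod p)ˣ := ZMod.unitOfCoprime i h.coprime_p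

theorem unit_pow (h : Hyp p q i) : h.unit ^ q = 1 := by
  apply Units.ext
  have h2 : ((i ^ q : ℕ) : ZMod (p * q)) = ((1 : ℕ) : ZMod (p * q)) :=
    (ZMod.natCast_eq_natCast_iff _ _ _).mpr h.pow_q_modeq
  push_cast at h2
  simpa [Hyp.unit] using h2

theorem unitP_pow (h : Hyp p q i) : h.unitP ^ q = 1 := by
  apply Units.ext
  have h2 : (i : ZMod p) ^ q = 1 := by rw [← h.hord]; exact pow_orderOf_eq_one _
  simpa [Hyp.unitP] using h2

end Hyp

/-- Multiplication by a unit, as an automorphism of the (multiplicatively written)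
cyclic group `ZMod n`. -/
def zmodMulAut (n : ℕ) : (ZMod n)ˣ →* MulAut (Multiplicative (ZMod n)) where
  toFun u :=
    { toFun := fun x => ofAdd ((u : ZMod n) * x.toAdd)
      invFun := fun x => ofAdd (((u⁻¹ : (ZMod n)ˣ) : ZMod n) * x.toAdd)
      left_inv := fun x => by simp
      right_inv := fun x => by simp
      map_mul' := fun x y => by simp [mul_add, ← ofAdd_add] }
  map_one' := by ext x; simp
  map_mul' u v := by ext x; simp [mul_assoc]

/-- The function underlying the automorphism of the dihedral group induced by
multiplication by a unit on the rotation part. -/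
def dihedralAutFun (n : ℕ) (u : (ZMod n)ˣ) : DihedralGroup n → DihedralGroup n
  | .r j => .r ((u : ZMod n) * j)
  | .sr j => .sr ((u : ZMod n) * j)

/-- Multiplication of indices by a unit, as an automorphism of the dihedral group:
`a ↦ a^u`, `b ↦ b`. -/
def dihedralAut (n : ℕ) : (ZMod n)ˣ →* MulAut (DihedralGroup n) where
  toFun u :=
    { toFun := dihedralAutFun n u
      invFun := dihedralAutFun n u⁻¹
      left_inv := fun x => by cases x <;> simp [dihedralAutFun]
      right_inv := fun x => by cases x <;> simp [dihedralAutFun]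
      map_mul' := fun x y => by cases x <;> cases y <;> simp [dihedralAutFun, mul_add, mul_sub] }
  map_one' := by ext x; cases x <;> simp [dihedralAutFun]
  map_mul' u v := by ext x; cases x <;> simp [dihedralAutFun, mul_assoc]

/-- The homomorphism `ZMod q →* G` (written multiplicatively) sending `1` to a fixed
element `g` with `g ^ q = 1`. -/
def zmodPow {G : Type*} [Group G] (q : ℕ) [NeZero q] (g : G) (hg : g ^ q = 1) :
    Multiplicative (ZMod q) →* G where
  toFun x := g ^ (toAdd x).val
  map_one' := by
    show g ^ (toAdd (1 : Multiplicative (ZMod q))).val = 1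
    rw [toAdd_one, ZMod.val_zero, pow_zero]
  map_mul' x y := by
    have key : ∀ m : ℕ, g ^ (m % q) = g ^ m := fun m => by
      conv_rhs => rw [← Nat.div_add_mod m q]
      rw [pow_add, pow_mul, hg, one_pow, one_mul]
    show g ^ (toAdd (x * y)).val = g ^ (toAdd x).val * g ^ (toAdd y).val
    rw [toAdd_mul, ZMod.val_add, key, pow_add]

namespace Hyp

variable {p q i : ℕ}

/-- The action of `C_q` on `C_{pq}` sending the generator to multiplication by `i`. -/
def phiN (h : Hyp p q i) : Multiplicative (ZMod q) →* MulAut (Multiplicative (ZMod (p * q))) :=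
  haveI : NeZero q := ⟨h.hq.ne_zero⟩
  zmodPow q (zmodMulAut (p * q) h.unit) (by rw [← map_pow, h.unit_pow, map_one])

/-- The action of `C_q` on `D_{2pq}` sending the generator to `τ` (`τ(a) = a^i`, `τ(b) = b`). -/
def phiG (h : Hyp p q i) : Multiplicative (ZMod q) →* MulAut (DihedralGroup (p * q)) :=
  haveI : NeZero q := ⟨h.hq.ne_zero⟩
  zmodPow q (dihedralAut (p * q) h.unit) (by rw [← map_pow, h.unit_pow, map_one])

/-- The action of `C_q` on `C_p` sending the generator to multiplication by `i`. -/
def phiF (h : Hyp p q i) : Multiplicative (ZMod q) →* MulAut (Multiplicative (ZMod p)) :=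
  haveI : NeZero q := ⟨h.hq.ne_zero⟩
  zmodPow q (zmodMulAut p h.unitP) (by rw [← map_pow, h.unitP_pow, map_one])

end Hyp

/-- The group `N_{pq²} = ⟨a, c ∣ a^{pq} = c^q = 1, c a c⁻¹ = a^i⟩ = C_{pq} ⋊ C_q`. -/
abbrev Npq2 {p q i : ℕ} (h : Hyp p q i) : Type :=
  Multiplicative (ZMod (p * q)) ⋊[h.phiN] Multiplicative (ZMod q)

/-- The group `G_{p,q} = D_{2pq} ⋊_φ C_q`. -/
abbrev Gpq {p q i : ℕ} (h : Hyp p q i) : Type :=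
  DihedralGroup (p * q) ⋊[h.phiG] Multiplicative (ZMod q)

/-- The Frobenius group `F_{p,q} = C_p ⋊ C_q` (the nonabelian group of order `pq`). -/
abbrev Fpq {p q i : ℕ} (h : Hyp p q i) : Type :=
  Multiplicative (ZMod p) ⋊[h.phiF] Multiplicative (ZMod q)

variable {p q i : ℕ}

/-- The generator `a` of `N_{pq²}`. -/
def aN (h : Hyp p q i) : Npq2 h := SemidirectProduct.inl (ofAdd 1)

/-- The generator `c` of `N_{pq²}`. -/
def cN (h : Hyp p q i) : Npq2 h := SemidirectProduct.inr (ofAdd 1)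

/-- The generator `a` of `G_{p,q}`. -/
def aG (h : Hyp p q i) : Gpq h := SemidirectProduct.inl (DihedralGroup.r 1)

/-- The generator `b` of `G_{p,q}`. -/
def bG (h : Hyp p q i) : Gpq h := SemidirectProduct.inl (DihedralGroup.sr 0)

/-- The generator `c` of `G_{p,q}`. -/
def cG (h : Hyp p q i) : Gpq h := SemidirectProduct.inr (ofAdd 1)

/-- The real conjugacy class `(g)^± = (g) ∪ (g⁻¹)`. -/
def realClass {G : Type*} [Group G] (g : G) : Set G := {x | IsConj g x ∨ IsConj g⁻¹ x}

/-- `N` is a normal subgroup whose quotient is an `ℓ`-group (the quotient has `ℓ`-power order,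
i.e. `N` has `ℓ`-power index). -/
def OQuot {G : Type*} [Group G] (ℓ : ℕ) (N : Subgroup G) : Prop :=
  N.Normal ∧ ∃ k : ℕ, N.index = ℓ ^ k

/-- `H` is a large subgroup of `G`: it contains `O^ℓ(G)`, the smallest normal subgroup
with `ℓ`-group quotient, for some prime `ℓ`. -/
def IsLarge {G : Type*} [Group G] (H : Subgroup G) : Prop :=
  ∃ ℓ : ℕ, Nat.Prime ℓ ∧
    ∃ N : Subgroup G, OQuot ℓ N ∧ (∀ M : Subgroup G, OQuot ℓ M → N ≤ M) ∧ N ≤ H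

section Reps

variable {k : Type*} [CommSemiring k] {G : Type*} [Group G]

/-- The subspace `V^H` of `H`-fixed vectors of a representation. -/
def fixedPts {V : Type*} [AddCommMonoid V] [Module k V]
    (ρ : Representation k G V) (H : Subgroup G) : Submodule k V where
  carrier := {v | ∀ g ∈ H, ρ g v = v}
  add_mem' := by
    intro a b ha hb g hg
    rw [map_add, ha g hg, hb g hg]
  zero_mem' := by
    intro g hg
    rw [map_zero]
  smul_mem' := by
    intro c v hv g hg
    rw [map_smul, hv g hg]

end Reps

/-- The weak gap condition for a real representation: `dim V^P ≥ 2 dim V^H` for all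
`P < H ≤ G` with `P` of prime power order. -/
def WeakGap {G : Type*} [Group G] {V : Type*} [AddCommGroup V] [Module ℝ V]
    (ρ : Representation ℝ G V) : Prop :=
  ∀ P H : Subgroup G, P < H → (∃ ℓ k : ℕ, Nat.Prime ℓ ∧ Nat.card P = ℓ ^ k) →
    2 * Module.finrank ℝ (fixedPts ρ H) ≤ Module.finrank ℝ (fixedPts ρ P)

/-- Isomorphism of real representations: an equivariant linear equivalence. -/
def RepIso {G : Type*} [Group G] {U V : Type*} [AddCommGroup U] [Module ℝ U]
    [AddCommGroup V] [Module ℝ V]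
    (ρU : Representation ℝ G U) (ρV : Representation ℝ G V) : Prop :=
  ∃ e : U ≃ₗ[ℝ] V, ∀ (g : G) (u : U), e (ρU g u) = ρV g (e u)

/-- Two real representations are `𝒫`-matched if their restrictions to every subgroup of
prime power order are isomorphic. -/
def PMatched {G : Type*} [Group G] {U V : Type*} [AddCommGroup U] [Module ℝ U]
    [AddCommGroup V] [Module ℝ V]
    (ρU : Representation ℝ G U) (ρV : Representation ℝ G V) : Prop :=
  ∀ P : Subgroup G, (∃ ℓ k : ℕ, Nat.Prime ℓ ∧ Nat.card P = ℓ ^ k) →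
    RepIso (ρU.comp P.subtype) (ρV.comp P.subtype)

/-- A bundled finite-dimensional-free real representation of `G`. -/
structure RealRep (G : Type*) [Group G] where
  carrier : Type
  [acg : AddCommGroup carrier]
  [mod : Module ℝ carrier]
  rho : Representation ℝ G carrier

attribute [instance] RealRep.acg RealRep.mod

theorem dihedralAut_pow_r (n : ℕ) (u : (ZMod n)ˣ) (k : ℕ) (m : ZMod n) :
    ((dihedralAut n u) ^ k) (DihedralGroup.r m)
      = DihedralGroup.r (((u ^ k : (ZMod n)ˣ) : ZMod n) * m) := by
  induction k generalizing m with
  | zero => simp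
  | succ k ih =>
    rw [pow_succ, MulAut.mul_apply]
    have h1 : (dihedralAut n u) (DihedralGroup.r m) = DihedralGroup.r ((u : ZMod n) * m) := rfl
    rw [h1, ih, pow_succ, Units.val_mul, mul_assoc]

theorem Hyp.phiG_r (h : Hyp p q i) (z : Multiplicative (ZMod q)) (m : ZMod (p * q)) :
    h.phiG z (DihedralGroup.r m)
      = DihedralGroup.r (((h.unit ^ (toAdd z).val : (ZMod (p * q))ˣ) : ZMod (p * q)) * m) := by
  have h1 : h.phiG z = (dihedralAut (p * q) h.unit) ^ (toAdd z).val := rfl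
  rw [h1, dihedralAut_pow_r]

theorem r_inv (n : ℕ) (m : ZMod n) : (DihedralGroup.r m)⁻¹ = DihedralGroup.r (-m) := rfl

/-- The subgroup `N_{pq²} = {(aˡ, cᵐ)}` of `G_{p,q}`. -/
def NSub (h : Hyp p q i) : Subgroup (Gpq h) where
  carrier := {x | ∃ l : ZMod (p * q), x.left = DihedralGroup.r l}
  one_mem' := ⟨0, rfl⟩
  mul_mem' := by
    rintro x y ⟨lx, hx⟩ ⟨ly, hy⟩
    refine ⟨lx + (h.unit ^ (toAdd x.right).val : (ZMod (p * q))ˣ) * ly, ?_⟩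
    rw [SemidirectProduct.mul_left, hx, hy, h.phiG_r, DihedralGroup.r_mul_r]
  inv_mem' := by
    rintro x ⟨lx, hx⟩
    refine ⟨-((h.unit ^ (toAdd x.right⁻¹).val : (ZMod (p * q))ˣ) * lx), ?_⟩
    rw [SemidirectProduct.inv_left, hx, r_inv, h.phiG_r]
    congr 1
    ring

/-- The subgroup `N_{2pq} = {(bᵉaˡ, 1)} ≅ D_{2pq}` of `G_{p,q}`. -/
def N2pqSub (h : Hyp p q i) : Subgroup (Gpq h) :=
  MonoidHom.ker SemidirectProduct.rightHom

/-- The subgroup `N¹_{pq} = {(aˡ, 1)}` of `G_{p,q}`. -/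
def NpqOneSub (h : Hyp p q i) : Subgroup (Gpq h) where
  carrier := {x | x.right = 1 ∧ ∃ l : ZMod (p * q), x.left = DihedralGroup.r l}
  one_mem' := ⟨rfl, 0, rfl⟩
  mul_mem' := by
    rintro x y ⟨hx1, lx, hx⟩ ⟨hy1, ly, hy⟩
    refine ⟨by rw [SemidirectProduct.mul_right, hx1, hy1, mul_one],
      lx + (h.unit ^ (toAdd x.right).val : (ZMod (p * q))ˣ) * ly, ?_⟩
    rw [SemidirectProduct.mul_left, hx, hy, h.phiG_r, DihedralGroup.r_mul_r]
  inv_mem' := by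
    rintro x ⟨hx1, lx, hx⟩
    refine ⟨by rw [SemidirectProduct.inv_right, hx1, inv_one],
      -((h.unit ^ (toAdd x.right⁻¹).val : (ZMod (p * q))ˣ) * lx), ?_⟩
    rw [SemidirectProduct.inv_left, hx, r_inv, h.phiG_r]
    congr 1
    ring

/-- The subgroup `N²_{pq} = {(a^{qs}, cᵐ)}` of `G_{p,q}`. -/
def NpqTwoSub (h : Hyp p q i) : Subgroup (Gpq h) where
  carrier := {x | ∃ s : ZMod (p * q), x.left = DihedralGroup.r ((q : ZMod (p * q)) * s)}
  one_mem' := ⟨0, by simp [DihedralGroup.one_def, -DihedralGroup.r_zero]⟩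
  mul_mem' := by
    rintro x y ⟨sx, hx⟩ ⟨sy, hy⟩
    refine ⟨sx + (h.unit ^ (toAdd x.right).val : (ZMod (p * q))ˣ) * sy, ?_⟩
    rw [SemidirectProduct.mul_left, hx, hy, h.phiG_r, DihedralGroup.r_mul_r]
    congr 1
    ring
  inv_mem' := by
    rintro x ⟨sx, hx⟩
    refine ⟨-((h.unit ^ (toAdd x.right⁻¹).val : (ZMod (p * q))ˣ) * sx), ?_⟩
    rw [SemidirectProduct.inv_left, hx, r_inv, h.phiG_r]
    congr 1
    ring

/-- The subgroup `N_p = {(a^{qs}, 1)}` of `G_{p,q}`. -/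
def NpSub (h : Hyp p q i) : Subgroup (Gpq h) where
  carrier := {x | x.right = 1 ∧ ∃ s : ZMod (p * q), x.left = DihedralGroup.r ((q : ZMod (p * q)) * s)}
  one_mem' := ⟨rfl, 0, by simp [DihedralGroup.one_def, -DihedralGroup.r_zero]⟩
  mul_mem' := by
    rintro x y ⟨hx1, sx, hx⟩ ⟨hy1, sy, hy⟩
    refine ⟨by rw [SemidirectProduct.mul_right, hx1, hy1, mul_one],
      sx + (h.unit ^ (toAdd x.right).val : (ZMod (p * q))ˣ) * sy, ?_⟩
    rw [SemidirectProduct.mul_left, hx, hy, h.phiG_r, DihedralGroup.r_mul_r]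
    congr 1
    ring
  inv_mem' := by
    rintro x ⟨hx1, sx, hx⟩
    refine ⟨by rw [SemidirectProduct.inv_right, hx1, inv_one],
      -((h.unit ^ (toAdd x.right⁻¹).val : (ZMod (p * q))ˣ) * sx), ?_⟩
    rw [SemidirectProduct.inv_left, hx, r_inv, h.phiG_r]
    congr 1
    ring

/-- The subgroup `N_q = {(a^{ps}, 1)}` of `G_{p,q}`. -/
def NqSub (h : Hyp p q i) : Subgroup (Gpq h) where
  carrier := {x | x.right = 1 ∧ ∃ s : ZMod (p * q), x.left = DihedralGroup.r ((p : ZMod (p * q)) * s)}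
  one_mem' := ⟨rfl, 0, by simp [DihedralGroup.one_def, -DihedralGroup.r_zero]⟩
  mul_mem' := by
    rintro x y ⟨hx1, sx, hx⟩ ⟨hy1, sy, hy⟩
    refine ⟨by rw [SemidirectProduct.mul_right, hx1, hy1, mul_one],
      sx + (h.unit ^ (toAdd x.right).val : (ZMod (p * q))ˣ) * sy, ?_⟩
    rw [SemidirectProduct.mul_left, hx, hy, h.phiG_r, DihedralGroup.r_mul_r]
    congr 1
    ring
  inv_mem' := by
    rintro x ⟨hx1, sx, hx⟩
    refine ⟨by rw [SemidirectProduct.inv_right, hx1, inv_one],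
      -((h.unit ^ (toAdd x.right⁻¹).val : (ZMod (p * q))ˣ) * sx), ?_⟩
    rw [SemidirectProduct.inv_left, hx, r_inv, h.phiG_r]
    congr 1
    ring

end Mizerka

open Mizerka in
/-- The group `N_{pq²}` has no normal subgroup of order `q²`. -/
theorem statement_1 {p q i : ℕ} (h : Hyp p q i)
    (N : Subgroup (Npq2 h)) (hN : N.Normal) :
    Nat.card N ≠ q ^ 2 := by
  intro hcard
  haveI : NeZero q := ⟨h.hq.ne_zero⟩
  haveI : NeZero (p * q) := ⟨Nat.mul_ne_zero h.hp.ne_zero h.hq.ne_zero⟩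
  haveI : Fact (1 < q) := ⟨h.hq.one_lt⟩
  have hq2 : 2 ≤ q := h.hq.two_le
  have hp2 : 2 ≤ p := h.hp.two_le
  have hpq : p ≠ q := by
    have h1 : 0 < p - 1 := by omega
    have := Nat.le_of_dvd h1 h.hdvd
    omega
  -- cardinality of the whole group
  have e : Npq2 h ≃ Multiplicative (ZMod (p * q)) × Multiplicative (ZMod q) :=
    ⟨fun x => (x.left, x.right), fun z => ⟨z.1, z.2⟩, fun x => rfl, fun z => rfl⟩
  haveI : Finite (Npq2 h) := Finite.of_equiv _ e.symm
  have hcardG : Nat.card (Npq2 h) = p * q * q := by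
    rw [Nat.card_congr e, Nat.card_prod,
      Nat.card_congr (Multiplicative.toAdd (α := ZMod (p * q))),
      Nat.card_congr (Multiplicative.toAdd (α := ZMod q)), Nat.card_zmod, Nat.card_zmod]
  have hidx : N.index = p := by
    have h1 := N.card_mul_index
    rw [hcard, hcardG] at h1
    have h2 : q ^ 2 * N.index = q ^ 2 * p := by rw [h1]; ring
    exact Nat.eq_of_mul_eq_mul_left (by positivity) h2
  -- every element with x ^ q = 1 lies in N
  have key : ∀ x : Npq2 h, x ^ q = 1 → x ∈ N := by
    intro x hx
    rw [← QuotientGroup.eq_one_iff]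
    have h1 : orderOf ((x : Npq2 h ⧸ N)) ∣ q :=
      orderOf_dvd_of_pow_eq_one (by rw [← QuotientGroup.mk_pow, hx]; rfl)
    have h2 : orderOf ((x : Npq2 h ⧸ N)) ∣ p := by
      have := orderOf_dvd_natCard ((x : Npq2 h ⧸ N))
      rwa [← Subgroup.index, hidx] at this
    have hco : Nat.Coprime p q := (Nat.coprime_primes h.hp h.hq).mpr hpq
    have h3 : orderOf ((x : Npq2 h ⧸ N)) = 1 :=
      Nat.eq_one_of_dvd_coprimes hco h2 h1
    exact orderOf_eq_one_iff.mp h3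
  -- c ∈ N
  have hcpow : (cN h) ^ q = 1 := by
    rw [cN, ← map_pow]
    have : (ofAdd (1 : ZMod q)) ^ q = 1 := by
      rw [← ofAdd_nsmul, nsmul_eq_mul, mul_one, ZMod.natCast_self, ofAdd_zero]
    rw [this, map_one]
  have hcN : cN h ∈ N := key _ hcpow
  -- the commutator y = c a c⁻¹ a⁻¹
  set y : Npq2 h := cN h * aN h * (cN h)⁻¹ * (aN h)⁻¹ with hy_def
  have hyN : y ∈ N := by
    have h1 : aN h * cN h * (aN h)⁻¹ ∈ N := hN.conj_mem _ hcN _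
    have h2 : y = (aN h * cN h * (aN h)⁻¹ * (cN h)⁻¹)⁻¹ := by
      rw [hy_def]; group
    rw [h2]
    exact N.inv_mem (N.mul_mem h1 (N.inv_mem hcN))
  -- explicit form of y
  have hy_eq : y = SemidirectProduct.inl (ofAdd ((i : ZMod (p * q)) - 1)) := by
    have h1 : cN h * aN h * (cN h)⁻¹
        = SemidirectProduct.inl (h.phiN (ofAdd 1) (ofAdd 1)) := by
      unfold cN aN
      rw [← map_inv]
      exact (SemidirectProduct.inl_aut (φ := h.phiN) (ofAdd 1) (ofAdd 1)).symm
    have h2 : h.phiN (ofAdd 1) (ofAdd 1) = ofAdd ((i : ZMod (p * q)) * 1) := by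
      show ((zmodMulAut (p * q) h.unit) ^ (toAdd (ofAdd (1 : ZMod q))).val)
          (ofAdd 1) = ofAdd ((i : ZMod (p * q)) * 1)
      rw [toAdd_ofAdd, ZMod.val_one, pow_one]
      show ofAdd ((h.unit : ZMod (p * q)) * toAdd (ofAdd (1 : ZMod (p * q)))) = _
      simp [Hyp.unit]
    rw [hy_def, h1, h2, aN, ← map_inv, ← map_mul]
    congr 1
    rw [mul_one, ← ofAdd_neg, ← ofAdd_add]
    congr 1
    ring
  -- q ∣ i - 1 in the sense i = q * t + 1
  obtain ⟨t, hi⟩ : ∃ t, i = q * t + 1 := by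
    have h1 : i % q = 1 % q := h.hmod
    have h2 : 1 % q = 1 := Nat.mod_eq_of_lt (by omega)
    refine ⟨i / q, ?_⟩
    conv_lhs => rw [← Nat.div_add_mod i q]
    rw [h1, h2]
  -- y has order p
  have hy_pow : y ^ p = 1 := by
    rw [hy_eq, ← map_pow]
    have h1 : (ofAdd ((i : ZMod (p * q)) - 1)) ^ p = 1 := by
      rw [← ofAdd_nsmul, nsmul_eq_mul]
      have h2 : ((i : ZMod (p * q)) - 1) = (q : ZMod (p * q)) * (t : ZMod (p * q)) := by
        rw [hi]; push_cast; ring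
      rw [h2]
      have h3 : (p : ZMod (p * q)) * ((q : ZMod (p * q)) * (t : ZMod (p * q)))
          = ((p * q : ℕ) : ZMod (p * q)) * (t : ZMod (p * q)) := by push_cast; ring
      rw [h3, ZMod.natCast_self, zero_mul, ofAdd_zero]
    rw [h1, map_one]
  have hy_ne : y ≠ 1 := by
    rw [hy_eq]
    intro hcon
    have h1 : ofAdd ((i : ZMod (p * q)) - 1) = (1 : Multiplicative (ZMod (p * q))) := by
      have := SemidirectProduct.inl_injective (φ := h.phiN)
      exact this (by rw [hcon, map_one])
    have h2 : (i : ZMod (p * q)) = 1 := by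
      have := congrArg Multiplicative.toAdd h1
      simpa [sub_eq_zero] using this
    have h3 : (i : ZMod p) = 1 := by
      have h4 := congrArg (ZMod.castHom (dvd_mul_right p q) (ZMod p)) h2
      rwa [map_natCast, map_one] at h4
    have h5 := h.hord
    rw [h3, orderOf_one] at h5
    omega
  have hy_ord : orderOf y = p := by
    have h1 : orderOf y ∣ p := orderOf_dvd_of_pow_eq_one hy_pow
    rcases (Nat.dvd_prime h.hp).mp h1 with h2 | h2
    · exact absurd (orderOf_eq_one_iff.mp h2) hy_ne
    · exact h2
  -- contradiction: p ∣ q ^ 2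
  have h1 : p ∣ q ^ 2 := by
    rw [← hy_ord, ← hcard]
    exact Subgroup.orderOf_dvd_natCard N hyN
  have h2 : p ∣ q := h.hp.dvd_of_dvd_pow h1
  exact hpq ((Nat.prime_dvd_prime_iff_eq h.hp h.hq).mp h2)
end

section
/- Let V be an irreducible complex representation of N_{pq²} of dimension greater than 1 on which the central element a^p acts nontrivially. Then for every subgroup H ≤ N_{pq²} of order q², the subspace of H-fixed vectors of V is zero. -/
open Multiplicative

namespace Mizerka

variable {p q i : ℕ}

theorem zmodMulAut_pow (n : ℕ) (u : (ZMod n)ˣ) (k : ℕ) (m : ZMod n) :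
    ((zmodMulAut n u) ^ k) (ofAdd m) = ofAdd (((u ^ k : (ZMod n)ˣ) : ZMod n) * m) := by
  induction k generalizing m with
  | zero => simp
  | succ k ih =>
    rw [pow_succ, MulAut.mul_apply]
    have h1 : (zmodMulAut n u) (ofAdd m) = ofAdd ((u : ZMod n) * m) := rfl
    rw [h1, ih, pow_succ, Units.val_mul]
    congr 1
    ring

theorem Hyp.phiN_apply {p q i : ℕ} (h : Hyp p q i) (z : Multiplicative (ZMod q))
    (m : ZMod (p * q)) :
    h.phiN z (ofAdd m)
      = ofAdd (((h.unit ^ (toAdd z).val : (ZMod (p * q))ˣ) : ZMod (p * q)) * m) := by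
  have h1 : h.phiN z = (zmodMulAut (p * q) h.unit) ^ (toAdd z).val := rfl
  rw [h1, zmodMulAut_pow]

theorem Hyp.unit_pow_mul_p {p q i : ℕ} (h : Hyp p q i) (k : ℕ) :
    ((h.unit ^ k : (ZMod (p * q))ˣ) : ZMod (p * q)) * (p : ZMod (p * q))
      = (p : ZMod (p * q)) := by
  have h1 : ((h.unit ^ k : (ZMod (p * q))ˣ) : ZMod (p * q)) = ((i ^ k : ℕ) : ZMod (p * q)) := by
    rw [Units.val_pow_eq_pow_val]
    push_cast
    rfl
  have h2 : i ^ k * p ≡ 1 * p [MOD q * p] := by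
    have := Nat.ModEq.mul_right' (c := p) (h.hmod.pow k)
    rwa [one_pow] at this
  have h2' : i ^ k * p ≡ 1 * p [MOD p * q] := by rwa [mul_comm p q]
  have h3 : ((i ^ k * p : ℕ) : ZMod (p * q)) = ((1 * p : ℕ) : ZMod (p * q)) :=
    (ZMod.natCast_eq_natCast_iff _ _ _).mpr h2'
  push_cast at h3
  rw [h1]
  rw [one_mul] at h3
  push_cast
  push_cast at h3
  exact h3

theorem Hyp.aN_pow_p {p q i : ℕ} (h : Hyp p q i) :
    (aN h) ^ p = SemidirectProduct.inl (ofAdd (p : ZMod (p * q))) := by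
  rw [aN, ← map_pow]
  congr 1
  rw [← ofAdd_nsmul]
  congr 1
  simp [nsmul_eq_mul]

theorem Hyp.central {p q i : ℕ} (h : Hyp p q i) (g : Npq2 h) :
    g * (aN h) ^ p = (aN h) ^ p * g := by
  rw [h.aN_pow_p]
  refine SemidirectProduct.ext ?_ ?_
  · rw [SemidirectProduct.mul_left, SemidirectProduct.mul_left,
      SemidirectProduct.left_inl, SemidirectProduct.right_inl,
      map_one, MulAut.one_apply, h.phiN_apply, h.unit_pow_mul_p]
    exact mul_comm _ _
  · rw [SemidirectProduct.mul_right, SemidirectProduct.mul_right,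
      SemidirectProduct.right_inl, mul_one, one_mul]

theorem Hyp.pow_p_mem {p q i : ℕ} (h : Hyp p q i) (H : Subgroup (Npq2 h))
    (hH : Nat.card H = q ^ 2) : (aN h) ^ p ∈ H := by
  haveI : NeZero p := ⟨h.hp.ne_zero⟩
  haveI : NeZero q := ⟨h.hq.ne_zero⟩
  haveI : NeZero (p * q) := ⟨Nat.mul_ne_zero h.hp.ne_zero h.hq.ne_zero⟩
  haveI : Fact q.Prime := ⟨h.hq⟩
  haveI : Finite (Npq2 h) := Finite.of_injective
    (fun x : Npq2 h => (x.left, x.right))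
    (fun x y hxy => SemidirectProduct.ext (congrArg Prod.fst hxy) (congrArg Prod.snd hxy))
  set f : H →* Multiplicative (ZMod q) := SemidirectProduct.rightHom.comp H.subtype with hf
  have hcardq : Nat.card (Multiplicative (ZMod q)) = q := by
    rw [Nat.card_congr Multiplicative.toAdd, Nat.card_zmod]
  have hidx : f.ker.index ∣ q := by
    have hd := Subgroup.card_subgroup_dvd_card f.range
    rw [hcardq] at hd
    rw [Subgroup.index_ker]
    exact hd
  have hq_dvd : q ∣ Nat.card f.ker := by
    obtain ⟨t, ht⟩ := hidx
    have hcard : Nat.card f.ker * f.ker.index = q ^ 2 := by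
      rw [Subgroup.card_mul_index, hH]
    have hindex_ne : f.ker.index ≠ 0 := Subgroup.index_ne_zero_of_finite
    have h2 : f.ker.index * Nat.card f.ker = f.ker.index * (t * q) := by
      rw [mul_comm f.ker.index (Nat.card f.ker), hcard, sq]
      calc q * q = (f.ker.index * t) * q := by rw [← ht]
        _ = f.ker.index * (t * q) := by ring
    have h3 : Nat.card f.ker = t * q :=
      Nat.eq_of_mul_eq_mul_left (Nat.pos_of_ne_zero hindex_ne) h2
    exact ⟨t, by rw [h3, mul_comm]⟩
  obtain ⟨k, hk⟩ := exists_prime_orderOf_dvd_card' (G := f.ker) q hq_dvd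
  set x : Npq2 h := ((k : H) : Npq2 h) with hx
  have hxH : x ∈ H := (k : H).2
  have hkq : k ^ q = 1 := by
    have hpow := pow_orderOf_eq_one k
    rwa [hk] at hpow
  have hxq : x ^ q = 1 := by
    have := congrArg (fun z : f.ker => ((z : H) : Npq2 h)) hkq
    simpa using this
  have hxne : x ≠ 1 := by
    intro hx1
    have hk1 : k = 1 := by
      apply Subtype.ext; apply Subtype.ext; exact hx1
    rw [hk1, orderOf_one] at hk
    exact h.hq.one_lt.ne' hk.symm
  have hxr : x.right = 1 := by
    have hker := k.2
    rw [MonoidHom.mem_ker] at hker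
    exact hker
  have hxl : x = SemidirectProduct.inl x.left := by
    refine SemidirectProduct.ext rfl ?_
    rw [SemidirectProduct.right_inl, hxr]
  have h1 : SemidirectProduct.inl (x.left ^ q) = (1 : Npq2 h) := by
    rw [map_pow, ← hxl, hxq]
  have h2 : x.left ^ q = 1 := by
    rwa [← map_one (SemidirectProduct.inl (φ := h.phiN)), SemidirectProduct.inl_inj] at h1
  have hq_smul : (q : ZMod (p * q)) * (toAdd x.left) = 0 := by
    have h3 : q • (toAdd x.left) = 0 := by
      rw [← toAdd_pow, h2, toAdd_one]
    rwa [nsmul_eq_mul] at h3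
  have hMne : toAdd x.left ≠ 0 := by
    intro h0
    apply hxne
    rw [hxl]
    have hl1 : x.left = 1 := by
      rw [← ofAdd_toAdd x.left, h0, ofAdd_zero]
    rw [hl1, map_one]
  set M : ℕ := (toAdd x.left).val with hM
  have hMlt : M < p * q := ZMod.val_lt _
  have hMc : ((M : ℕ) : ZMod (p * q)) = toAdd x.left := ZMod.natCast_zmod_val _
  have hM0 : M ≠ 0 := by
    intro h0
    apply hMne
    rw [← hMc, h0, Nat.cast_zero]
  have hdvd : p * q ∣ q * M := by
    rw [← ZMod.natCast_eq_zero_iff]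
    push_cast
    rw [hMc]
    exact hq_smul
  have hpM : p ∣ M := by
    obtain ⟨t, ht⟩ := hdvd
    refine ⟨t, ?_⟩
    have h4 : q * M = q * (p * t) := by rw [ht]; ring
    exact Nat.eq_of_mul_eq_mul_left h.hq.pos h4
  obtain ⟨t, ht⟩ := hpM
  have ht0 : t ≠ 0 := by
    rintro rfl
    rw [Nat.mul_zero] at ht
    exact hM0 ht
  have htq : t < q := by
    by_contra hc
    push_neg at hc
    have hle : p * q ≤ M := by
      rw [ht]
      exact Nat.mul_le_mul_left p hc
    omega
  have htq0 : ((t : ZMod q)) ≠ 0 := by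
    rw [Ne, ZMod.natCast_eq_zero_iff]
    intro hd
    exact absurd (Nat.le_of_dvd (Nat.pos_of_ne_zero ht0) hd) (by omega)
  set w : ℕ := ((t : ZMod q)⁻¹).val with hw
  have hwt : ((w * t : ℕ) : ZMod q) = ((1 : ℕ) : ZMod q) := by
    push_cast
    rw [hw, ZMod.natCast_zmod_val]
    exact inv_mul_cancel₀ htq0
  have hmodeq : w * t ≡ 1 [MOD q] := (ZMod.natCast_eq_natCast_iff _ _ _).mp hwt
  have hwt1 : 1 ≤ w * t := by
    rcases Nat.eq_zero_or_pos (w * t) with h0 | h1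
    · exfalso
      rw [h0] at hmodeq
      have h5 : (0 : ℕ) % q = 1 % q := hmodeq
      rw [Nat.zero_mod, Nat.mod_eq_of_lt h.hq.one_lt] at h5
      exact one_ne_zero h5.symm
    · exact h1
  obtain ⟨s, hs⟩ := (Nat.modEq_iff_dvd' hwt1).mp hmodeq.symm
  have hwts : w * t = 1 + q * s := by omega
  have hxw : x ^ w = (aN h) ^ p := by
    rw [h.aN_pow_p, hxl, ← map_pow]
    congr 1
    rw [← ofAdd_toAdd x.left, ← ofAdd_nsmul]
    congr 1
    rw [nsmul_eq_mul]
    calc (w : ZMod (p * q)) * toAdd x.left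
        = ((w * M : ℕ) : ZMod (p * q)) := by rw [← hMc]; push_cast; ring
      _ = ((p + p * q * s : ℕ) : ZMod (p * q)) := by
          congr 1
          rw [ht, show w * (p * t) = p * (w * t) by ring, hwts]
          ring
      _ = (p : ZMod (p * q)) := by
          rw [Nat.cast_add, Nat.cast_mul, ZMod.natCast_self, zero_mul, add_zero]
  rw [← hxw]
  exact pow_mem hxH w

end Mizerka

open Mizerka in
/-- If `V` is an irreducible complex representation of `N_{pq²}` of dimension
greater than `1` on which the central element `a^p` acts nontrivially, then for every
subgroup `H ≤ N_{pq²}` of order `q²` the subspace of `H`-fixed vectors of `V` is zero. -/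
theorem statement_4 {p q i : ℕ} (h : Hyp p q i) (V : Type) [AddCommGroup V] [Module ℂ V]
    [FiniteDimensional ℂ V] (ρ : Representation ℂ (Npq2 h) V)
    (hirr : ∀ W : Submodule ℂ V, (∀ (g : Npq2 h), ∀ v ∈ W, ρ g v ∈ W) → W = ⊥ ∨ W = ⊤)
    (hdim : 1 < Module.finrank ℂ V)
    (hcent : ρ ((aN h) ^ p) ≠ 1) :
    ∀ H : Subgroup (Npq2 h), Nat.card H = q ^ 2 →
      ∀ v : V, (∀ g ∈ H, ρ g v = v) → v = 0 := by
  intro H hH v hv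
  have hmem : (aN h) ^ p ∈ H := h.pow_p_mem H hH
  set W : Submodule ℂ V := LinearMap.ker (ρ ((aN h) ^ p) - LinearMap.id) with hWdef
  have hmemW : ∀ u : V, u ∈ W ↔ ρ ((aN h) ^ p) u = u := by
    intro u
    rw [hWdef, LinearMap.mem_ker, LinearMap.sub_apply, LinearMap.id_apply, sub_eq_zero]
  have hinv : ∀ (g : Npq2 h), ∀ u ∈ W, ρ g u ∈ W := by
    intro g u hu
    rw [hmemW] at hu ⊢
    rw [← Module.End.mul_apply, ← map_mul, ← h.central g, map_mul, Module.End.mul_apply, hu]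
  rcases hirr W hinv with hbot | htop
  · have hvW : v ∈ W := (hmemW v).mpr (hv _ hmem)
    rw [hbot] at hvW
    simpa using hvW
  · exfalso
    apply hcent
    ext u
    have huW : u ∈ W := htop ▸ Submodule.mem_top
    rw [hmemW] at huW
    simpa using huW
end
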